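/- Let X be a real normed vector space, ε > 0, and let x₁, …, xₙ ∈ X be points such that for all 1 ≤ i, j ≤ n, ‖xᵢ − xⱼ‖ < 2ε if and only if |i − j| ≤ 1. For 1 ≤ i ≤ n−1 let Lᵢ = {t xᵢ + (1−t) xᵢ₊₁ : t ∈ [0,1]} be the straight line segment joining xᵢ to xᵢ₊₁. Then Lᵢ ∩ Lᵢ₊₁ = {xᵢ₊₁} for all 1 ≤ i ≤ n−2, and Lᵢ ∩ Lⱼ = ∅ whenever 1 ≤ i and i + 1 < j ≤ n−1; consequently the union ⋃_{i=1}^{n−1} Lᵢ is a continuous, piecewise-linear, non-self-intersecting curve joining x₁ to xₙ. -/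

import Mathlib

open Set

lemma seg_norms {X : Type*} [NormedAddCommGroup X] [NormedSpace ℝ X] {x z y : X}
    (hy : y ∈ segment ℝ x z) : ‖y - x‖ + ‖y - z‖ = ‖x - z‖ := by
  obtain ⟨a, b, ha, hb, hab, rfl⟩ := hy
  have e1 : a • x + b • z - x = b • (z - x) := by
    have h1 : a = 1 - b := by linarith
    rw [h1]; module
  have e2 : a • x + b • z - z = a • (x - z) := by
    have h2 : b = 1 - a := by linarith
    rw [h2]; module
  rw [e1, e2, norm_smul, norm_smul, Real.norm_eq_abs, Real.norm_eq_abs,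
    abs_of_nonneg ha, abs_of_nonneg hb, norm_sub_rev z x]
  linear_combination hab * ‖x - z‖

lemma chain_pc {X : Type*} [NormedAddCommGroup X] [NormedSpace ℝ X]
    (p : ℕ → X) (n : ℕ) (hn : 2 ≤ n) :
    IsPathConnected (⋃ i ∈ Finset.Ico 1 n, segment ℝ (p i) (p (i + 1))) := by
  induction n, hn using Nat.le_induction with
  | base =>
    have : Finset.Ico 1 2 = {1} := rfl
    simp only [this, Finset.mem_singleton, iUnion_iUnion_eq_left]
    exact (convex_segment _ _).isPathConnected ⟨_, left_mem_segment _ _ _⟩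
  | succ n hn ih =>
    have hins : Finset.Ico 1 (n + 1) = insert n (Finset.Ico 1 n) := by
      rw [Finset.Ico_insert_right (by omega)]
      · ext k; simp [Finset.mem_Ico, Finset.mem_Icc]
    rw [hins, Finset.set_biUnion_insert]
    obtain ⟨m, rfl⟩ : ∃ m, n = m + 1 := ⟨n - 1, by omega⟩
    refine IsPathConnected.union
      ((convex_segment _ _).isPathConnected ⟨_, left_mem_segment _ _ _⟩) ih ?_
    refine ⟨p (m + 1), left_mem_segment _ _ _, ?_⟩
    exact Set.mem_iUnion₂.mpr ⟨m, Finset.mem_Ico.mpr ⟨by omega, by omega⟩,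
      right_mem_segment ℝ (p m) (p (m + 1))⟩

/-- in a real normed space, if x₁, …, xₙ satisfy ‖xᵢ − xⱼ‖ < 2ε iff
|i − j| ≤ 1, and Lᵢ is the segment joining xᵢ to xᵢ₊₁ (1 ≤ i ≤ n−1), then consecutive
segments meet exactly in their common endpoint, non-consecutive segments are disjoint, and
consequently the union of the segments is a (path-connected) continuous piecewise-linear
non-self-intersecting curve joining x₁ to xₙ. -/
theorem stmt19 {X : Type*} [NormedAddCommGroup X] [NormedSpace ℝ X]
    (ε : ℝ) (hε : 0 < ε) (n : ℕ) (p : ℕ → X)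
    (h : ∀ i j : ℕ, 1 ≤ i → i ≤ n → 1 ≤ j → j ≤ n →
      (‖p i - p j‖ < 2 * ε ↔ |(i : ℤ) - (j : ℤ)| ≤ 1)) :
    (∀ i : ℕ, 1 ≤ i → i + 2 ≤ n →
      segment ℝ (p i) (p (i + 1)) ∩ segment ℝ (p (i + 1)) (p (i + 2)) = {p (i + 1)}) ∧
    (∀ i j : ℕ, 1 ≤ i → i + 1 < j → j + 1 ≤ n →
      segment ℝ (p i) (p (i + 1)) ∩ segment ℝ (p j) (p (j + 1)) = ∅) ∧
    (2 ≤ n →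
      p 1 ∈ (⋃ i ∈ Finset.Ico 1 n, segment ℝ (p i) (p (i + 1))) ∧
      p n ∈ (⋃ i ∈ Finset.Ico 1 n, segment ℝ (p i) (p (i + 1))) ∧
      IsPathConnected (⋃ i ∈ Finset.Ico 1 n, segment ℝ (p i) (p (i + 1)))) := by
  have far : ∀ k l : ℕ, 1 ≤ k → k ≤ n → 1 ≤ l → l ≤ n → (k : ℤ) + 2 ≤ (l : ℤ) →
      2 * ε ≤ ‖p k - p l‖ := by
    intro k l hk hkn hl hln hkl
    by_contra hc
    push_neg at hc
    have h2 := (h k l hk hkn hl hln).mp hc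
    rw [abs_le] at h2
    omega
  have near : ∀ k : ℕ, 1 ≤ k → k + 1 ≤ n → ‖p k - p (k + 1)‖ < 2 * ε := by
    intro k hk hkn
    refine (h k (k + 1) hk (by omega) (by omega) hkn).mpr ?_
    rw [abs_le]
    constructor <;> push_cast <;> omega
  refine ⟨?_, ?_, ?_⟩
  · -- consecutive segments meet in exactly the common endpoint
    intro i hi1 hin
    ext y
    simp only [mem_inter_iff, mem_singleton_iff]
    constructor
    · rintro ⟨hy1, hy2⟩
      obtain ⟨a, b, ha, hb, hab, hy⟩ := hy1
      obtain ⟨c, d, hc, hd, hcd, hy'⟩ := hy2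
      have e1 : y - p (i + 1) = a • (p i - p (i + 1)) := by
        rw [← hy]
        have hb' : b = 1 - a := by linarith
        rw [hb']; module
      have e2 : y - p (i + 1) = d • (p (i + 2) - p (i + 1)) := by
        rw [← hy']
        have hc' : c = 1 - d := by linarith
        rw [hc']; module
      rcases eq_or_lt_of_le ha with ha0 | ha0
      · have hz : y - p (i + 1) = 0 := by rw [e1, ← ha0, zero_smul]
        exact sub_eq_zero.mp hz
      rcases eq_or_lt_of_le hd with hd0 | hd0
      · have hz : y - p (i + 1) = 0 := by rw [e2, ← hd0, zero_smul]
        exact sub_eq_zero.mp hz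
      exfalso
      set u := p i - p (i + 1) with hu
      have hL : ‖u‖ < 2 * ε := near i hi1 (by omega)
      have hM : ‖p (i + 2) - p (i + 1)‖ < 2 * ε := by
        rw [norm_sub_rev]
        exact near (i + 1) (by omega) (by omega)
      have hBig : 2 * ε ≤ ‖p i - p (i + 2)‖ :=
        far i (i + 2) hi1 (by omega) (by omega) (by omega) (by push_cast; omega)
      have key : d • (p (i + 2) - p (i + 1)) = a • u := e2.symm.trans e1
      have e4 : d • (p i - p (i + 2)) = (d - a) • u := by
        have e5 : d • (p i - p (i + 2)) = d • u - d • (p (i + 2) - p (i + 1)) := by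
          rw [hu]; module
        rw [e5, key, ← sub_smul]
      have n4 : d * ‖p i - p (i + 2)‖ = |d - a| * ‖u‖ := by
        have h6 := congrArg norm e4
        rwa [norm_smul, norm_smul, Real.norm_eq_abs, Real.norm_eq_abs,
          abs_of_pos hd0] at h6
      have n5 : d * ‖p (i + 2) - p (i + 1)‖ = a * ‖u‖ := by
        have h7 := congrArg norm key
        rwa [norm_smul, norm_smul, Real.norm_eq_abs, Real.norm_eq_abs,
          abs_of_pos hd0, abs_of_pos ha0] at h7
      rcases abs_cases (d - a) with ⟨habs, _⟩ | ⟨habs, _⟩ <;>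
        nlinarith [norm_nonneg u, mul_pos hd0 hε, mul_nonneg ha0.le (norm_nonneg u),
          mul_pos ha0 hε]
    · rintro rfl
      exact ⟨right_mem_segment ℝ _ _, left_mem_segment ℝ _ _⟩
  · -- non-consecutive segments are disjoint
    intro i j hi hij hjn
    rw [eq_empty_iff_forall_notMem]
    rintro y ⟨hy1, hy2⟩
    have s1 := seg_norms hy1
    have s2 := seg_norms hy2
    have hL : ‖p i - p (i + 1)‖ < 2 * ε := near i hi (by omega)
    have hM : ‖p j - p (j + 1)‖ < 2 * ε := near j (by omega) hjn
    have h1 : 2 * ε ≤ ‖p i - p j‖ :=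
      far i j hi (by omega) (by omega) (by omega) (by omega)
    have h2 : 2 * ε ≤ ‖p (i + 1) - p (j + 1)‖ :=
      far (i + 1) (j + 1) (by omega) (by omega) (by omega) (by omega) (by push_cast; omega)
    have t1 : ‖p i - p j‖ ≤ ‖y - p i‖ + ‖y - p j‖ := by
      have := norm_sub_le (y - p j) (y - p i)
      simp only [sub_sub_sub_cancel_left] at this
      linarith [this]
    have t2 : ‖p (i + 1) - p (j + 1)‖ ≤ ‖y - p (i + 1)‖ + ‖y - p (j + 1)‖ := by
      have := norm_sub_le (y - p (j + 1)) (y - p (i + 1))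
      simp only [sub_sub_sub_cancel_left] at this
      linarith [this]
    linarith
  · -- the union is a path-connected curve joining p 1 to p n
    intro hn
    refine ⟨?_, ?_, chain_pc p n hn⟩
    · exact Set.mem_iUnion₂.mpr ⟨1, Finset.mem_Ico.mpr ⟨by omega, by omega⟩,
        left_mem_segment ℝ (p 1) (p 2)⟩
    · obtain ⟨m, rfl⟩ : ∃ m, n = m + 1 := ⟨n - 1, by omega⟩
      exact Set.mem_iUnion₂.mpr ⟨m, Finset.mem_Ico.mpr ⟨by omega, by omega⟩,
        right_mem_segment ℝ (p m) (p (m + 1))⟩
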